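/- arXiv:2509.25989 — 3 statements merged into one kernel-verified Lean document; each statement's English description precedes it below -/
import Mathlib

section
/- For a (K,k,2) covering design (a family of k-element subsets of a K-element set such that every 2-element subset is contained in some block), the number of blocks is at least ⌈(K/k)·⌈(K-1)/(k-1)⌉⌉. -/
/-- Schönheim lower bound for `t = 2`: any `(K,k,2)` covering design has at
least `⌈(K/k)·⌈(K-1)/(k-1)⌉⌉` blocks. -/
theorem schonheim_bound_t2 (K k : ℕ) (hk : 2 ≤ k) (hK : k ≤ K)
    (B : Finset (Finset (Fin K)))
    (hblocks : ∀ b ∈ B, b.card = k)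
    (hcover : ∀ T : Finset (Fin K), T.card = 2 → ∃ b ∈ B, T ⊆ b) :
    ⌈(K : ℚ) / k * (⌈((K : ℚ) - 1) / ((k : ℚ) - 1)⌉ : ℚ)⌉ ≤ (B.card : ℤ) := by
  have hK2 : 2 ≤ K := le_trans hk hK
  have hkQ : (2:ℚ) ≤ (k:ℚ) := by exact_mod_cast hk
  have hKQ : (2:ℚ) ≤ (K:ℚ) := by exact_mod_cast hK2
  set r : ℤ := ⌈((K : ℚ) - 1) / ((k : ℚ) - 1)⌉ with hr
  -- degree bound: every point lies in at least r blocks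
  have hdeg : ∀ x : Fin K, r ≤ ((B.filter (fun b => x ∈ b)).card : ℤ) := by
    intro x
    set D := B.filter (fun b => x ∈ b) with hD
    have hcov : (Finset.univ.erase x) ⊆ D.biUnion (fun b => b.erase x) := by
      intro y hy
      have hyx : y ≠ x := Finset.ne_of_mem_erase hy
      obtain ⟨b, hb, hsub⟩ := hcover {x, y} (by
        rw [Finset.card_insert_of_notMem (by simp [hyx.symm]), Finset.card_singleton])
      refine Finset.mem_biUnion.2 ⟨b, ?_, ?_⟩
      · exact Finset.mem_filter.2 ⟨hb, hsub (by simp)⟩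
      · exact Finset.mem_erase.2 ⟨hyx, hsub (by simp)⟩
    have h1 : K - 1 ≤ (D.biUnion (fun b => b.erase x)).card := by
      calc K - 1 = (Finset.univ.erase x).card := by
            simp [Finset.card_erase_of_mem, Finset.card_univ]
        _ ≤ _ := Finset.card_le_card hcov
    have h2 : (D.biUnion (fun b => b.erase x)).card ≤ D.card * (k - 1) := by
      refine le_trans (Finset.card_biUnion_le) ?_
      calc ∑ b ∈ D, (b.erase x).card ≤ D.card • (k - 1) := by
            refine Finset.sum_le_card_nsmul D _ (k-1) fun b hb => ?_
            have hbB : b ∈ B := (Finset.mem_filter.1 hb).1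
            have hxb : x ∈ b := (Finset.mem_filter.1 hb).2
            rw [Finset.card_erase_of_mem hxb, hblocks b hbB]
        _ = D.card * (k - 1) := by simp [smul_eq_mul]
    have hKk : K - 1 ≤ D.card * (k - 1) := le_trans h1 h2
    rw [hr, Int.ceil_le, div_le_iff₀ (by linarith)]
    have hcast : ((K:ℚ) - 1) = ((K - 1 : ℕ) : ℚ) := by
      have : (1:ℕ) ≤ K := by omega
      push_cast [this]; ring
    have hcast2 : ((k:ℚ) - 1) = ((k - 1 : ℕ) : ℚ) := by
      have : (1:ℕ) ≤ k := by omega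
      push_cast [this]; ring
    rw [hcast, hcast2]
    exact_mod_cast hKk
  -- double counting
  have hcount : (K : ℤ) * r ≤ (k : ℤ) * B.card := by
    have hsum : ∑ b ∈ B, b.card = ∑ x : Fin K, (B.filter (fun b => x ∈ b)).card := by
      simp only [Finset.card_filter]
      rw [Finset.sum_comm]
      refine Finset.sum_congr rfl fun b _ => ?_
      rw [← Finset.card_filter]
      congr 1
      simp
    have hleft : (K : ℤ) * r ≤ ∑ x : Fin K, ((B.filter (fun b => x ∈ b)).card : ℤ) := by
      calc (K : ℤ) * r = ∑ _x : Fin K, r := by simp [mul_comm]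
        _ ≤ _ := Finset.sum_le_sum (fun x _ => hdeg x)
    have hright : (∑ x : Fin K, ((B.filter (fun b => x ∈ b)).card : ℤ)) = (k : ℤ) * B.card := by
      push_cast
      rw [← Nat.cast_sum, ← hsum]
      have : ∑ b ∈ B, b.card = k * B.card := by
        rw [Finset.sum_congr rfl hblocks]
        simp [mul_comm]
      rw [this]; push_cast; ring
    rw [← hright]; exact hleft
  rw [Int.ceil_le, div_mul_eq_mul_div, div_le_iff₀ (by linarith)]
  have : (K:ℚ) * r ≤ (k:ℚ) * B.card := by exact_mod_cast hcount
  exact this.trans_eq (mul_comm _ _)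
end

section
/- If V₁, …, V_{n+1} are exchangeable and almost surely distinct, then the rank of V_{n+1} among the n+1 values is uniformly distributed on {1, …, n+1}. -/
open MeasureTheory ENNReal

/-- The number of coordinates of `x` strictly below `x k`. -/
private noncomputable def cnt (n : ℕ) (k : Fin (n + 1)) (x : Fin (n + 1) → ℝ) : ℕ :=
  (Finset.univ.filter (fun j => x j < x k)).card

private lemma cnt_eq_sum (n : ℕ) (k : Fin (n + 1)) (x : Fin (n + 1) → ℝ) :
    cnt n k x = ∑ j : Fin (n + 1), if x j < x k then 1 else 0 := by
  rw [cnt, Finset.card_filter]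

private lemma measurable_cnt (n : ℕ) (k : Fin (n + 1)) :
    Measurable (cnt n k) := by
  have : cnt n k = fun x => ∑ j : Fin (n + 1), if x j < x k then 1 else 0 := by
    funext x; exact cnt_eq_sum n k x
  rw [this]
  exact Finset.measurable_sum _ fun j _ =>
    Measurable.ite (measurableSet_lt (measurable_pi_apply j) (measurable_pi_apply k))
      measurable_const measurable_const

private lemma cnt_comp (n : ℕ) (σ : Equiv.Perm (Fin (n + 1))) (k : Fin (n + 1))
    (x : Fin (n + 1) → ℝ) : cnt n k (fun i => x (σ i)) = cnt n (σ k) x := by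
  rw [cnt_eq_sum, cnt_eq_sum]
  exact Equiv.sum_comp σ (fun j => if x j < x (σ k) then 1 else 0)

private lemma cnt_le (n : ℕ) (k : Fin (n + 1)) (x : Fin (n + 1) → ℝ) :
    cnt n k x ≤ n := by
  have h : (Finset.univ.filter (fun j => x j < x k)) ⊆ Finset.univ.erase k := by
    intro j hj
    simp only [Finset.mem_filter] at hj
    refine Finset.mem_erase.2 ⟨?_, Finset.mem_univ _⟩
    rintro rfl; exact lt_irrefl _ hj.2
  calc cnt n k x ≤ (Finset.univ.erase k).card := Finset.card_le_card h
    _ = n := by simp [Finset.card_erase_of_mem]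

private lemma cnt_strictMono (n : ℕ) (x : Fin (n + 1) → ℝ) {k k' : Fin (n + 1)}
    (h : x k < x k') : cnt n k x < cnt n k' x := by
  apply Finset.card_lt_card
  constructor
  · intro j hj
    simp only [Finset.mem_filter] at hj ⊢
    exact ⟨hj.1, hj.2.trans h⟩
  · intro hsub
    have hk : k ∈ Finset.univ.filter (fun j => x j < x k') := by
      simp [h]
    have := hsub hk
    simp only [Finset.mem_filter] at this
    exact lt_irrefl _ this.2

private lemma cnt_injective (n : ℕ) (x : Fin (n + 1) → ℝ)
    (hx : Function.Injective x) : Function.Injective (fun k => cnt n k x) := by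
  intro k k' h
  by_contra hne
  rcases lt_trichotomy (x k) (x k') with hlt | heq | hgt
  · exact absurd h (Nat.ne_of_lt (cnt_strictMono n x hlt))
  · exact hne (hx heq)
  · exact absurd h.symm (Nat.ne_of_lt (cnt_strictMono n x hgt))

/-- On the set where the coordinates are distinct, every value `c ≤ n` is attained
by `cnt` at exactly one index. -/
private lemma cnt_existsUnique (n : ℕ) (x : Fin (n + 1) → ℝ)
    (hx : Function.Injective x) (c : ℕ) (hc : c ≤ n) :
    ∃! k : Fin (n + 1), cnt n k x = c := by
  set f : Fin (n + 1) → Fin (n + 1) := fun k => ⟨cnt n k x, Nat.lt_succ_of_le (cnt_le n k x)⟩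
  have hf : Function.Injective f := by
    intro k k' h
    exact cnt_injective n x hx (by simpa [f, Fin.ext_iff] using h)
  have hsurj : Function.Surjective f := Finite.surjective_of_injective hf
  obtain ⟨k, hk⟩ := hsurj ⟨c, Nat.lt_succ_of_le hc⟩
  have h1 : cnt n k x = c := congrArg Fin.val hk
  refine ⟨k, h1, ?_⟩
  intro k' hk'
  apply hf
  exact Fin.ext (by simp only [f]; rw [hk', h1])

/-- If `V 0, …, V n` are exchangeable and almost surely pairwise distinct, then
the rank of the last variable among all `n+1` values is uniform on `{1,…,n+1}`. -/
theorem conformal_rank_uniform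
    {Ω : Type*} [MeasurableSpace Ω] (ℙ : Measure Ω) [IsProbabilityMeasure ℙ]
    (n : ℕ) (V : Fin (n + 1) → Ω → ℝ) (hmeas : ∀ i, Measurable (V i))
    (hexch : ∀ σ : Equiv.Perm (Fin (n + 1)),
      Measure.map (fun ω => fun i => V (σ i) ω) ℙ
        = Measure.map (fun ω => fun i => V i ω) ℙ)
    (hdistinct : ∀ i j : Fin (n + 1), i ≠ j → ℙ {ω | V i ω = V j ω} = 0) :
    ∀ r ∈ Finset.Icc 1 (n + 1),
      ℙ {ω | 1 + (Finset.univ.filter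
          (fun i : Fin n => V i.castSucc ω < V (Fin.last n) ω)).card = r}
        = (n + 1 : ℝ≥0∞)⁻¹ := by
  intro r hr
  rw [Finset.mem_Icc] at hr
  set g : Ω → (Fin (n + 1) → ℝ) := fun ω i => V i ω with hg
  have hgmeas : Measurable g := measurable_pi_lambda _ hmeas
  -- The event that the rank of coordinate k equals r.
  set E : Fin (n + 1) → Set Ω := fun k => {ω | 1 + cnt n k (g ω) = r} with hE
  have hEmeas : ∀ k, MeasurableSet (E k) := by
    intro k
    have hm : Measurable (fun ω => 1 + cnt n k (g ω)) :=
      measurable_const.add ((measurable_cnt n k).comp hgmeas)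
    exact hm (measurableSet_singleton r)
  -- The event in the statement is `E (Fin.last n)`.
  have hbridge : {ω | 1 + (Finset.univ.filter
      (fun i : Fin n => V i.castSucc ω < V (Fin.last n) ω)).card = r} = E (Fin.last n) := by
    ext ω
    have : (Finset.univ.filter
        (fun i : Fin n => V i.castSucc ω < V (Fin.last n) ω)).card
        = cnt n (Fin.last n) (g ω) := by
      rw [cnt_eq_sum, Fin.sum_univ_castSucc, Finset.card_filter]
      simp [hg]
    simp [hE, this]
  -- All events E k have equal measure, by exchangeability.
  have hEk : ∀ k, ℙ (E k) = ℙ (E (Fin.last n)) := by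
    intro k
    set σ : Equiv.Perm (Fin (n + 1)) := Equiv.swap (Fin.last n) k with hσ
    have hσlast : σ (Fin.last n) = k := Equiv.swap_apply_left _ _
    set S : Set (Fin (n + 1) → ℝ) := {x | 1 + cnt n (Fin.last n) x = r} with hS
    have hSmeas : MeasurableSet S := by
      have hm : Measurable (fun x => 1 + cnt n (Fin.last n) x) :=
        measurable_const.add (measurable_cnt n (Fin.last n))
      exact hm (measurableSet_singleton r)
    have hσmeas : Measurable (fun ω => fun i => V (σ i) ω) :=
      measurable_pi_lambda _ (fun i => hmeas (σ i))
    have h2 : Measure.map (fun ω => fun i => V (σ i) ω) ℙ S = Measure.map g ℙ S := by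
      rw [hexch σ]
    rw [Measure.map_apply hσmeas hSmeas, Measure.map_apply hgmeas hSmeas] at h2
    have hpre1 : (fun ω => fun i => V (σ i) ω) ⁻¹' S = E k := by
      ext ω
      simp only [Set.mem_preimage, hS, Set.mem_setOf_eq, hE]
      have : cnt n (Fin.last n) (fun i => V (σ i) ω) = cnt n k (g ω) := by
        have := cnt_comp n σ (Fin.last n) (g ω)
        rw [hσlast] at this
        exact this
      rw [this]
    have hpre2 : g ⁻¹' S = E (Fin.last n) := by
      ext ω; simp [hS, hE]
    rw [hpre1, hpre2] at h2
    exact h2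
  -- The almost sure set of distinctness.
  set D : Set Ω := {ω | Function.Injective (g ω)} with hD
  have hDmeas : MeasurableSet D := by
    have : D = ⋂ i, ⋂ j, {ω | V i ω = V j ω → i = j} := by
      ext ω
      simp only [hD, Set.mem_setOf_eq, Set.mem_iInter, Function.Injective]
      exact Iff.rfl
    rw [this]
    refine MeasurableSet.iInter fun i => MeasurableSet.iInter fun j => ?_
    by_cases hij : i = j
    · subst hij
      have : {ω | V i ω = V i ω → i = i} = Set.univ := by
        ext ω; simp
      rw [this]; exact MeasurableSet.univ
    · have : {ω | V i ω = V j ω → i = j} = {ω | V i ω = V j ω}ᶜ := by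
        ext ω; simp [hij]
      rw [this]
      exact (measurableSet_eq_fun (hmeas i) (hmeas j)).compl
  have hDc : ℙ Dᶜ = 0 := by
    have hsub : Dᶜ ⊆ ⋃ i, ⋃ j, ⋃ (_ : i ≠ j), {ω | V i ω = V j ω} := by
      intro ω hω
      simp only [hD, Set.mem_compl_iff, Set.mem_setOf_eq, Function.Injective] at hω
      push_neg at hω
      obtain ⟨i, j, hij, hne⟩ := hω
      exact Set.mem_iUnion.2 ⟨i, Set.mem_iUnion.2 ⟨j, Set.mem_iUnion.2 ⟨hne, hij⟩⟩⟩
    refine measure_mono_null hsub ?_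
    refine measure_iUnion_null fun i => measure_iUnion_null fun j =>
      measure_iUnion_null fun hij => hdistinct i j hij
  have hDone : ℙ D = 1 := by
    have := measure_add_measure_compl hDmeas (μ := ℙ)
    rw [hDc, add_zero] at this
    simpa using this
  -- On D, the events E k partition D.
  have hUnique : ∀ ω ∈ D, ∃! k, ω ∈ E k := by
    intro ω hω
    have hinj : Function.Injective (g ω) := hω
    have hc : r - 1 ≤ n := by omega
    obtain ⟨k, hk, huniq⟩ := cnt_existsUnique n (g ω) hinj (r - 1) hc
    refine ⟨k, ?_, ?_⟩
    · show 1 + cnt n k (g ω) = r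
      omega
    · intro k' hk'
      have : cnt n k' (g ω) = r - 1 := by
        have := hk'; simp only [hE, Set.mem_setOf_eq] at this; omega
      exact huniq k' this
  have hdisj : Pairwise (Function.onFun Disjoint (fun k => E k ∩ D)) := by
    intro k k' hkk'
    rw [Function.onFun, Set.disjoint_left]
    rintro ω ⟨hωk, hωD⟩ ⟨hωk', _⟩
    obtain ⟨k₀, _, huniq⟩ := hUnique ω hωD
    exact hkk' ((huniq k hωk).trans (huniq k' hωk').symm)
  have hcover : (⋃ k, E k ∩ D) = D := by
    apply Set.Subset.antisymm
    · intro ω hω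
      obtain ⟨k, ⟨_, hωD⟩⟩ := Set.mem_iUnion.1 hω
      exact hωD
    · intro ω hω
      obtain ⟨k, hk, _⟩ := hUnique ω hω
      exact Set.mem_iUnion.2 ⟨k, hk, hω⟩
  have hsum : ∑ k : Fin (n + 1), ℙ (E k ∩ D) = 1 := by
    have h := measure_iUnion hdisj (fun k => (hEmeas k).inter hDmeas) (μ := ℙ)
    rw [hcover, hDone] at h
    rw [← tsum_fintype (L := SummationFilter.unconditional _)]
    exact h.symm
  have hinter : ∀ k, ℙ (E k ∩ D) = ℙ (E k) := by
    intro k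
    apply le_antisymm (measure_mono Set.inter_subset_left)
    calc ℙ (E k) ≤ ℙ ((E k ∩ D) ∪ Dᶜ) := by
          apply measure_mono
          intro ω hω
          by_cases hωD : ω ∈ D
          · exact Or.inl ⟨hω, hωD⟩
          · exact Or.inr hωD
      _ ≤ ℙ (E k ∩ D) + ℙ Dᶜ := measure_union_le _ _
      _ = ℙ (E k ∩ D) := by rw [hDc, add_zero]
  have hfinal : (n + 1 : ℝ≥0∞) * ℙ (E (Fin.last n)) = 1 := by
    calc (n + 1 : ℝ≥0∞) * ℙ (E (Fin.last n))
        = ∑ _k : Fin (n + 1), ℙ (E (Fin.last n)) := by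
          rw [Finset.sum_const, Finset.card_univ, Fintype.card_fin, nsmul_eq_mul]
          push_cast
          ring
      _ = ∑ k : Fin (n + 1), ℙ (E k ∩ D) := by
          refine Finset.sum_congr rfl fun k _ => ?_
          rw [hinter k, hEk k]
      _ = 1 := hsum
  have hne0 : (n + 1 : ℝ≥0∞) ≠ 0 := by
    have : ((n + 1 : ℕ) : ℝ≥0∞) ≠ 0 := Nat.cast_ne_zero.mpr (Nat.succ_ne_zero n)
    simpa using this
  have hnetop : (n + 1 : ℝ≥0∞) ≠ ⊤ := by
    have : ((n + 1 : ℕ) : ℝ≥0∞) ≠ ⊤ := ENNReal.natCast_ne_top _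
    simpa using this
  rw [hbridge]
  have : ℙ (E (Fin.last n)) = (n + 1 : ℝ≥0∞)⁻¹ * ((n + 1 : ℝ≥0∞) * ℙ (E (Fin.last n))) := by
    rw [← mul_assoc, ENNReal.inv_mul_cancel hne0 hnetop, one_mul]
  rw [this, hfinal, mul_one]
end

section
/- The Schönheim recursion: C(K,k,t) ≥ ⌈(K/k) · C(K-1, k-1, t-1)⌉, where C(K,k,t) denotes the minimum number of blocks in a (K,k,t) covering design. -/
/-- `C(K,k,t)`: the minimum number of blocks of a `(K,k,t)` covering design,
i.e. a family of `k`-subsets of `Fin K` covering every `t`-subset. -/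
noncomputable def coveringNumber (K k t : ℕ) : ℕ :=
  sInf {n : ℕ | ∃ B : Finset (Finset (Fin K)), B.card = n ∧
    (∀ b ∈ B, b.card = k) ∧
    ∀ T : Finset (Fin K), T.card = t → ∃ b ∈ B, T ⊆ b}

/-- Schönheim recursion: `C(K,k,t) ≥ ⌈(K/k) · C(K-1,k-1,t-1)⌉`. -/
theorem schonheim_recursion (K k t : ℕ) (ht : 1 ≤ t) (hk : t ≤ k) (hK : k ≤ K) :
    ⌈(K : ℚ) / k * (coveringNumber (K - 1) (k - 1) (t - 1) : ℚ)⌉₊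
      ≤ coveringNumber K k t := by
  set C' := coveringNumber (K - 1) (k - 1) (t - 1) with hC'
  have hk0 : 0 < k := lt_of_lt_of_le ht hk
  have hK0 : 0 < K := lt_of_lt_of_le hk0 hK
  -- nonemptiness of the defining set
  have hne : {n : ℕ | ∃ B : Finset (Finset (Fin K)), B.card = n ∧
      (∀ b ∈ B, b.card = k) ∧
      ∀ T : Finset (Fin K), T.card = t → ∃ b ∈ B, T ⊆ b}.Nonempty := by
    refine ⟨_, Finset.univ.powersetCard k, rfl, ?_, ?_⟩
    · intro b hb; exact (Finset.mem_powersetCard.mp hb).2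
    · intro T hT
      obtain ⟨u, hTu, -, hu⟩ := Finset.exists_subsuperset_card_eq
        (T.subset_univ) (hT ▸ hk) (by simpa using hK)
      exact ⟨u, Finset.mem_powersetCard.mpr ⟨Finset.subset_univ u, hu⟩, hTu⟩
  obtain ⟨B, hBcard, hBsize, hBcov⟩ := Nat.sInf_mem hne
  -- main counting argument: K * C' ≤ k * B.card
  have key : ∀ x : Fin K, C' ≤ (B.filter (fun b => x ∈ b)).card := by
    intro x
    have hcardsub : Fintype.card {y : Fin K // y ≠ x} = K - 1 := by
      simp [Fintype.card_subtype_compl]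
    let e : {y : Fin K // y ≠ x} ≃ Fin (K - 1) := Fintype.equivFinOfCardEq hcardsub
    let F : Finset (Fin K) → Finset (Fin (K - 1)) := fun b =>
      (b.erase x).attach.image (fun y => e ⟨y.1, Finset.ne_of_mem_erase y.2⟩)
    have hle : C' ≤ ((B.filter (fun b => x ∈ b)).image F).card := by
      apply Nat.sInf_le
      refine ⟨_, rfl, ?_, ?_⟩
      · intro b' hb'
        obtain ⟨b, hb, rfl⟩ := Finset.mem_image.mp hb'
        obtain ⟨hbB, hxb⟩ := Finset.mem_filter.mp hb
        have hinj : Function.Injective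
            (fun (y : {a // a ∈ b.erase x}) => e ⟨y.1, Finset.ne_of_mem_erase y.2⟩) := by
          intro a b hab
          exact Subtype.ext (Subtype.mk_eq_mk.mp (e.injective hab))
        rw [Finset.card_image_of_injective _ hinj, Finset.card_attach,
          Finset.card_erase_of_mem hxb, hBsize b hbB]
      · intro T' hT'
        let T : Finset (Fin K) := T'.image (fun z => (e.symm z).1)
        have hTinj : Function.Injective (fun z : Fin (K - 1) => (e.symm z).1) := by
          intro a b hab
          exact e.symm.injective (Subtype.ext hab)
        have hTcard : T.card = t - 1 := by
          rw [Finset.card_image_of_injective _ hTinj, hT']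
        have hxT : x ∉ T := by
          intro hx
          obtain ⟨z, -, hz⟩ := Finset.mem_image.mp hx
          exact (e.symm z).2 hz
        have hScard : (insert x T).card = t := by
          rw [Finset.card_insert_of_notMem hxT, hTcard]
          omega
        obtain ⟨b, hbB, hSb⟩ := hBcov _ hScard
        have hxb : x ∈ b := hSb (Finset.mem_insert_self x T)
        refine ⟨F b, Finset.mem_image.mpr ⟨b, Finset.mem_filter.mpr ⟨hbB, hxb⟩, rfl⟩, ?_⟩
        intro z hz
        have hmem : (e.symm z).1 ∈ b.erase x :=
          Finset.mem_erase.mpr ⟨(e.symm z).2,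
            hSb (Finset.mem_insert_of_mem (Finset.mem_image_of_mem _ hz))⟩
        refine Finset.mem_image.mpr ⟨⟨(e.symm z).1, hmem⟩, Finset.mem_attach _ _, ?_⟩
        simpa using e.apply_symm_apply z
    exact hle.trans (Finset.card_image_le)
  have hcount : K * C' ≤ k * B.card := by
    have h1 : (Finset.univ : Finset (Fin K)).sum (fun x => (B.filter (fun b => x ∈ b)).card)
        = B.sum (fun b => b.card) := by
      simp only [Finset.card_filter]
      rw [Finset.sum_comm]
      refine Finset.sum_congr rfl fun b _ => ?_
      rw [← Finset.card_filter, Finset.filter_univ_mem]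
    have h2 : B.sum (fun b => b.card) = k * B.card := by
      rw [Finset.sum_congr rfl (fun b hb => hBsize b hb), Finset.sum_const, smul_eq_mul,
        mul_comm]
    calc K * C' = (Finset.univ : Finset (Fin K)).sum (fun _ => C') := by
          simp [mul_comm]
      _ ≤ (Finset.univ : Finset (Fin K)).sum (fun x => (B.filter (fun b => x ∈ b)).card) :=
          Finset.sum_le_sum (fun x _ => key x)
      _ = k * B.card := h1.trans h2
  have hBeq : coveringNumber K k t = B.card := hBcard.symm
  rw [Nat.ceil_le, hBeq]
  rw [div_mul_eq_mul_div, div_le_iff₀ (by exact_mod_cast hk0)]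
  have : (K : ℚ) * C' ≤ k * B.card := by exact_mod_cast hcount
  linarith
end
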